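/- Let f : ℂ^N → ℝ be differentiable (over ℝ) with L-Lipschitz gradient ∇f for some L > 0, let h : ℂ^N → ℝ be convex and differentiable, and set F = h + f. Let C ⊆ ℂ^N be a nonempty closed convex set with F* := inf_{x ∈ C} F(x) finite. Let B ∈ ℂ^{N×N} be Hermitian with η·I_N ⪯ B ⪯ η̄·I_N for some 0 < η < η̄, and let ν > 0. Suppose α satisfies 0 < α ≤ min{η̄/ν, η/L}, and suppose the proximal Polyak–Łojasiewicz inequality D_h^C(z, ∇f(z), I_N, α/η̄) ≥ 2ν·(F(z) − F*) holds for all z ∈ C. Fix x ∈ C and let x⁺ ∈ C be a minimizer over C of x̄ ↦ S_h(x̄, x, ∇f(x), B, α). Then F(x⁺) − F* ≤ (1 − ν·α/η̄)·(F(x) − F*). -/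

import Mathlib

open scoped ComplexOrder

noncomputable section

/-- `ℂ^N` with the standard complex inner product (conjugate-linear in the
first argument) and the induced norm. -/
abbrev EC (N : ℕ) := EuclideanSpace ℂ (Fin N)

/-- Weighted squared norm `‖z‖_W² = zᴴ W z` (its real part, which is the full
value when `W` is Hermitian). -/
def wnorm2 {N : ℕ} (W : Matrix (Fin N) (Fin N) ℂ) (z : EC N) : ℝ :=
  (dotProduct (fun i => starRingEnd ℂ (z i)) (W.mulVec (fun i => z i))).re

/-- Surrogate `S_h(x̄, x, g, W, α) = Re⟨g, x̄ − x⟩ + (1/(2α))‖x̄ − x‖_W² + h(x̄) − h(x)`. -/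
def Sh {N : ℕ} (h : EC N → ℝ) (W : Matrix (Fin N) (Fin N) ℂ) (α : ℝ)
    (g x xb : EC N) : ℝ :=
  (inner ℂ g (xb - x) : ℂ).re + (1 / (2 * α)) * wnorm2 W (xb - x) + h xb - h x

/-- `D_h^C(x, g, W, α) = −(2/α)·inf_{x̄ ∈ C} S_h(x̄, x, g, W, α)`. -/
def Dh {N : ℕ} (h : EC N → ℝ) (C : Set (EC N)) (W : Matrix (Fin N) (Fin N) ℂ)
    (α : ℝ) (g x : EC N) : ℝ :=
  -(2 / α) * sInf ((fun xb => Sh h W α g x xb) '' C)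

/-- The real-linear continuous functional `d ↦ Re⟨g, d⟩`, used to say that a
real-differentiable `f : ℂ^N → ℝ` has gradient `g` at a point. -/
def gradDual {N : ℕ} (g : EC N) : EC N →L[ℝ] ℝ :=
  Complex.reCLM.comp ((innerSL ℂ g).restrictScalars ℝ)

/-- The rank-one matrix `u·uᴴ` with entries `uᵢ · conj(uⱼ)`. -/
def rankOne {N : ℕ} (u : EC N) : Matrix (Fin N) (Fin N) ℂ :=
  Matrix.vecMulVec (fun i => u i) (fun i => starRingEnd ℂ (u i))

end

lemma wnorm2_one {N : ℕ} (z : EC N) : wnorm2 1 z = ‖z‖ ^ 2 := by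
  have h := inner_self_eq_norm_sq (𝕜 := ℂ) z
  unfold wnorm2
  rw [Matrix.one_mulVec]
  have h2 : dotProduct (fun i => starRingEnd ℂ (z i)) (fun i => z i)
      = (inner ℂ z z : ℂ) := by
    simp only [dotProduct, PiLp.inner_apply, RCLike.inner_apply]
    exact Finset.sum_congr rfl fun i _ => by ring
  rw [h2, ← h]
  simp [RCLike.re_to_complex]

lemma wnorm2_smul_one {N : ℕ} (r : ℝ) (z : EC N) :
    wnorm2 (r • (1 : Matrix (Fin N) (Fin N) ℂ)) z = r * ‖z‖ ^ 2 := by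
  unfold wnorm2
  rw [Matrix.smul_mulVec, dotProduct_smul]
  rw [Complex.smul_re, Matrix.one_mulVec]
  have := wnorm2_one z
  unfold wnorm2 at this
  rw [Matrix.one_mulVec] at this
  rw [this]; rfl

lemma wnorm2_sub {N : ℕ} (A B : Matrix (Fin N) (Fin N) ℂ) (z : EC N) :
    wnorm2 (A - B) z = wnorm2 A z - wnorm2 B z := by
  unfold wnorm2
  rw [Matrix.sub_mulVec, dotProduct_sub, Complex.sub_re]

lemma wnorm2_nonneg {N : ℕ} {M : Matrix (Fin N) (Fin N) ℂ} (hM : M.PosSemidef)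
    (z : EC N) : 0 ≤ wnorm2 M z := by
  have := hM.re_dotProduct_nonneg (fun i => z i)
  simpa [wnorm2, RCLike.re_to_complex, dotProduct] using this

lemma descent {N : ℕ} (f : EC N → ℝ) (gradf : EC N → EC N) (L : ℝ) (hL : 0 ≤ L)
    (hfdiff : ∀ z : EC N, HasFDerivAt f (gradDual (gradf z)) z)
    (hlip : ∀ z₁ z₂ : EC N, ‖gradf z₁ - gradf z₂‖ ≤ L * ‖z₁ - z₂‖)
    (x y : EC N) :
    f y ≤ f x + (inner ℂ (gradf x) (y - x) : ℂ).re + L / 2 * ‖y - x‖ ^ 2 := by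
  set v : EC N := y - x with hv
  set c : ℝ := (inner ℂ (gradf x) v : ℂ).re with hc
  set ψ : ℝ → ℝ := fun t => f (x + t • v) - t * c - L / 2 * ‖v‖ ^ 2 * t ^ 2 with hψdef
  have hline : ∀ t : ℝ, HasDerivAt (fun s : ℝ => x + s • v) v t := fun t => by
    simpa using ((hasDerivAt_id t).smul_const v).const_add x
  have hφ : ∀ t : ℝ, HasDerivAt (fun s : ℝ => f (x + s • v))
      ((inner ℂ (gradf (x + t • v)) v : ℂ).re) t := fun t => by
    have := (hfdiff (x + t • v)).comp_hasDerivAt t (hline t)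
    simp [gradDual] at this
    exact this
  have hψ : ∀ t : ℝ, HasDerivAt ψ
      ((inner ℂ (gradf (x + t • v)) v : ℂ).re - c - L * ‖v‖ ^ 2 * t) t := fun t => by
    have h1 := ((hφ t).sub ((hasDerivAt_id t).mul_const c)).sub
      ((hasDerivAt_pow 2 t).const_mul (L / 2 * ‖v‖ ^ 2))
    exact h1.congr_deriv (by ring)
  have hmono : AntitoneOn ψ (Set.Icc (0:ℝ) 1) := by
    apply antitoneOn_of_deriv_nonpos (convex_Icc 0 1)
    · exact (Differentiable.continuous fun t => (hψ t).differentiableAt).continuousOn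
    · exact fun t _ => ((hψ t).differentiableAt).differentiableWithinAt
    · intro t ht
      rw [interior_Icc] at ht
      rw [(hψ t).deriv]
      have key : (inner ℂ (gradf (x + t • v)) v : ℂ).re - c ≤ L * ‖v‖ ^ 2 * t := by
        have heq : (inner ℂ (gradf (x + t • v)) v : ℂ).re - c
            = (inner ℂ (gradf (x + t • v) - gradf x) v : ℂ).re := by
          rw [inner_sub_left, Complex.sub_re]
        rw [heq]
        have h1 : (inner ℂ (gradf (x + t • v) - gradf x) v : ℂ).re
            ≤ ‖gradf (x + t • v) - gradf x‖ * ‖v‖ := by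
          have := re_inner_le_norm (𝕜 := ℂ) (gradf (x + t • v) - gradf x) v
          simpa only [RCLike.re_to_complex] using this
        have h2 : ‖gradf (x + t • v) - gradf x‖ ≤ L * (t * ‖v‖) := by
          have := hlip (x + t • v) x
          simpa [norm_smul, abs_of_pos ht.1] using this
        calc (inner ℂ (gradf (x + t • v) - gradf x) v : ℂ).re
            ≤ ‖gradf (x + t • v) - gradf x‖ * ‖v‖ := h1
          _ ≤ L * (t * ‖v‖) * ‖v‖ := by
              apply mul_le_mul_of_nonneg_right h2 (norm_nonneg _)
          _ = L * ‖v‖ ^ 2 * t := by ring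
      linarith
  have h01 := hmono (Set.mem_Icc.2 ⟨le_refl 0, zero_le_one⟩)
    (Set.mem_Icc.2 ⟨zero_le_one, le_refl 1⟩) zero_le_one
  have e0 : ψ 0 = f x := by simp [hψdef]
  have e1 : ψ 1 = f y - c - L / 2 * ‖v‖ ^ 2 := by
    simp [hψdef, hv]
  rw [e0, e1] at h01
  linarith

/-- Linear decrease under the proximal PL inequality.
With `f` real-differentiable with `L`-Lipschitz gradient, `h` convex
differentiable, `F = h + f`, `C` nonempty closed convex with finite infimum
`F*`, `B` Hermitian with `η·I ⪯ B ⪯ η̄·I` (`0 < η < η̄`), `ν > 0`,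
`0 < α ≤ min{η̄/ν, η/L}`, and the proximal PL inequality
`D_h^C(z, ∇f(z), I, α/η̄) ≥ 2ν(F(z) − F*)` for all `z ∈ C`: if `x ∈ C` and
`x⁺ ∈ C` minimizes `x̄ ↦ S_h(x̄, x, ∇f(x), B, α)` over `C`, then
`F(x⁺) − F* ≤ (1 − να/η̄)(F(x) − F*)`. -/
theorem stmt15 {N : ℕ} (f : EC N → ℝ) (gradf : EC N → EC N) (L : ℝ) (hL : 0 < L)
    (hfdiff : ∀ z : EC N, HasFDerivAt f (gradDual (gradf z)) z)
    (hlip : ∀ z₁ z₂ : EC N, ‖gradf z₁ - gradf z₂‖ ≤ L * ‖z₁ - z₂‖)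
    (h : EC N → ℝ) (hconv : ConvexOn ℝ Set.univ h) (hdiff : Differentiable ℝ h)
    (F : EC N → ℝ) (hF : F = fun z => h z + f z)
    (C : Set (EC N)) (hCne : C.Nonempty) (hCcl : IsClosed C) (hCcv : Convex ℝ C)
    (Fstar : ℝ) (hFstar : IsGLB (F '' C) Fstar)
    (η ηb : ℝ) (hη : 0 < η) (hηηb : η < ηb)
    (B : Matrix (Fin N) (Fin N) ℂ) (hBH : B.IsHermitian)
    (hBlb : (B - η • (1 : Matrix (Fin N) (Fin N) ℂ)).PosSemidef)
    (hBub : (ηb • (1 : Matrix (Fin N) (Fin N) ℂ) - B).PosSemidef)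
    (ν : ℝ) (hν : 0 < ν)
    (α : ℝ) (hα : 0 < α) (hαle : α ≤ min (ηb / ν) (η / L))
    (hPL : ∀ z ∈ C, Dh h C 1 (α / ηb) (gradf z) z ≥ 2 * ν * (F z - Fstar))
    (x : EC N) (hx : x ∈ C) (xp : EC N) (hxp : xp ∈ C)
    (hmin : IsMinOn (fun xb => Sh h B α (gradf x) x xb) C xp) :
    F xp - Fstar ≤ (1 - ν * α / ηb) * (F x - Fstar) := by
  set g : EC N := gradf x with hg
  set a : ℝ := α / ηb with ha
  have hηb : (0:ℝ) < ηb := hη.trans hηηb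
  have hapos : (0:ℝ) < a := div_pos hα hηb
  -- bounds on wnorm2 B
  have hub : ∀ z : EC N, wnorm2 B z ≤ ηb * ‖z‖ ^ 2 := by
    intro z
    have := wnorm2_nonneg hBub z
    rw [wnorm2_sub, wnorm2_smul_one] at this
    linarith
  have hlb : ∀ z : EC N, η * ‖z‖ ^ 2 ≤ wnorm2 B z := by
    intro z
    have := wnorm2_nonneg hBlb z
    rw [wnorm2_sub, wnorm2_smul_one] at this
    linarith
  -- pointwise comparison of surrogates
  have hptwise : ∀ xb : EC N, Sh h B α g x xb ≤ Sh h 1 a g x xb := by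
    intro xb
    unfold Sh
    rw [wnorm2_one]
    have h1 : (1 / (2 * α)) * wnorm2 B (xb - x) ≤ (1 / (2 * a)) * ‖xb - x‖ ^ 2 := by
      have h2 := hub (xb - x)
      have h3 : (1 / (2 * α)) * wnorm2 B (xb - x) ≤ (1 / (2 * α)) * (ηb * ‖xb - x‖ ^ 2) :=
        mul_le_mul_of_nonneg_left h2 (by positivity)
      have h4 : (1 / (2 * α)) * (ηb * ‖xb - x‖ ^ 2) = (1 / (2 * a)) * ‖xb - x‖ ^ 2 := by
        rw [ha]; field_simp
      linarith
    linarith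
  -- xp's surrogate value is below the inf over C of the (1, a) surrogate
  have hsinf : Sh h B α g x xp ≤ sInf ((fun xb => Sh h 1 a g x xb) '' C) := by
    apply le_csInf (hCne.image _)
    rintro b ⟨xb, hxb, rfl⟩
    exact le_trans (hmin hxb) (hptwise xb)
  -- PL inequality gives a bound on that inf
  set s : ℝ := sInf ((fun xb => Sh h 1 a g x xb) '' C) with hs
  have hPLx := hPL x hx
  unfold Dh at hPLx
  rw [← hs] at hPLx
  have hsle : s ≤ -(a * ν * (F x - Fstar)) := by
    have h3 : (2 / a) * s ≤ -(2 * ν * (F x - Fstar)) := by linarith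
    have h4 : (a / 2) * ((2 / a) * s) ≤ (a / 2) * (-(2 * ν * (F x - Fstar))) :=
      mul_le_mul_of_nonneg_left h3 (by positivity)
    have h5 : (a / 2) * ((2 / a) * s) = s := by field_simp
    have h6 : (a / 2) * (-(2 * ν * (F x - Fstar))) = -(a * ν * (F x - Fstar)) := by ring
    linarith
  -- descent lemma
  have hdesc : f xp ≤ f x + (inner ℂ g (xp - x) : ℂ).re + L / 2 * ‖xp - x‖ ^ 2 :=
    descent f gradf L hL.le hfdiff hlip x xp
  have hquad : L / 2 * ‖xp - x‖ ^ 2 ≤ (1 / (2 * α)) * wnorm2 B (xp - x) := by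
    have h7 := hlb (xp - x)
    have h8 : α * L ≤ η := by
      have := (le_min_iff.mp hαle).2
      calc α * L ≤ (η / L) * L := by
            exact mul_le_mul_of_nonneg_right this hL.le
        _ = η := by field_simp
    have h9 : L / 2 * ‖xp - x‖ ^ 2 ≤ (1 / (2 * α)) * (η * ‖xp - x‖ ^ 2) := by
      rw [div_mul_eq_mul_div, one_div, ← div_eq_inv_mul]
      rw [div_le_div_iff₀ (by norm_num) (by positivity)]
      nlinarith [sq_nonneg ‖xp - x‖]
    calc L / 2 * ‖xp - x‖ ^ 2 ≤ (1 / (2 * α)) * (η * ‖xp - x‖ ^ 2) := h9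
      _ ≤ (1 / (2 * α)) * wnorm2 B (xp - x) :=
          mul_le_mul_of_nonneg_left h7 (by positivity)
  have hFdec : F xp - F x ≤ Sh h B α g x xp := by
    rw [hF]
    unfold Sh
    dsimp only
    linarith
  -- combine
  have hfinal : F xp - F x ≤ -(a * ν * (F x - Fstar)) := le_trans hFdec (le_trans hsinf hsle)
  have hco : ν * α / ηb = a * ν := by rw [ha]; ring
  rw [sub_le_iff_le_add] at hfinal ⊢
  calc F xp ≤ -(a * ν * (F x - Fstar)) + F x := by linarith
    _ = (1 - ν * α / ηb) * (F x - Fstar) + Fstar := by rw [hco]; ring
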